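/- arXiv:2604.15599 — 2 statements merged into one kernel-verified Lean document; each statement's English description precedes it below -/
import Mathlib

section
/- Under the limiting joint distribution of Motzkin paths with joint PGF M_p(u,v) = v/(u+v-3)^2, the sum DEG + UNP has PGF M_p(u,u) = u/(2u-3)^2, which equals the PGF of 1 + NB(2,1/3); hence CHN = DEG + UNP - 1 is distributed NB(2,1/3) with mean 4 and variance 12. -/
open Filter Topology

/-- A Motzkin word: steps in `{1, 0, -1}` (up, horizontal, down), total sum 0,
and every prefix has nonnegative sum. -/
def IsMotzkinWord (l : List ℤ) : Prop :=
  (∀ s ∈ l, s = 1 ∨ s = 0 ∨ s = -1) ∧ l.sum = 0 ∧ ∀ p ∈ l.inits, 0 ≤ p.sum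

/-- Number of horizontal steps at height 0. -/
def motzkinFlats (l : List ℤ) : ℕ :=
  (List.range l.length).countP (fun i => decide ((l.take i).sum = 0 ∧ l.getD i 0 = 0))

/-- Number of mountains: returns to the x-axis via a down step. -/
def motzkinMountains (l : List ℤ) : ℕ :=
  (List.range l.length).countP (fun i => decide ((l.take (i + 1)).sum = 0 ∧ l.getD i 0 = -1))

/-- Number of Motzkin paths of length `n` with `i` horizontal steps at height 0
and `j` mountains. -/
noncomputable def motzkinCount (n i j : ℕ) : ℕ :=
  Nat.card {l : List ℤ //
    l.length = n ∧ IsMotzkinWord l ∧ motzkinFlats l = i ∧ motzkinMountains l = j}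

/-- The Motzkin number: number of Motzkin paths of length `n`. -/
noncomputable def motzkinTotal (n : ℕ) : ℕ :=
  Nat.card {l : List ℤ // l.length = n ∧ IsMotzkinWord l}

/-- Limiting joint probability that a uniform Motzkin path has `i` horizontal
steps at height 0 and `j` mountains. -/
noncomputable def motzkinLimit (i j : ℕ) : ℝ :=
  (Nat.choose (i + j - 1) i : ℝ) * ((i : ℝ) + (j : ℝ)) / 3 ^ (i + j + 1)

noncomputable def mrow (k : ℕ) : ℝ := (k : ℝ) * 2 ^ (k - 1) / 3 ^ (k + 1)

lemma motzkinLimit_nonneg (i j : ℕ) : 0 ≤ motzkinLimit i j := by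
  unfold motzkinLimit; positivity

lemma antidiag_motzkin_sum (k : ℕ) :
    ∑ p ∈ Finset.HasAntidiagonal.antidiagonal k, motzkinLimit p.1 p.2 = mrow k := by
  rcases Nat.eq_zero_or_pos k with rfl | hk
  · simp [motzkinLimit, mrow]
  obtain ⟨m, rfl⟩ := Nat.exists_eq_add_of_le hk
  have h : ∀ p ∈ Finset.HasAntidiagonal.antidiagonal (1 + m), motzkinLimit p.1 p.2
      = (m.choose p.1 : ℝ) * ((1 + m : ℕ) : ℝ) / 3 ^ (1 + m + 1) := by
    rintro ⟨i, j⟩ hp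
    rw [Finset.HasAntidiagonal.mem_antidiagonal] at hp
    simp only [motzkinLimit, hp]
    have h2 : ((i : ℝ) + j) = ((1 + m : ℕ) : ℝ) := by exact_mod_cast hp
    rw [h2, show 1 + m - 1 = m from by omega]
  rw [Finset.sum_congr rfl h, Finset.Nat.sum_antidiagonal_eq_sum_range_succ_mk]
  simp only [← Finset.sum_div, ← Finset.sum_mul]
  rw [show (1 + m) = m + 1 by omega]
  rw [Finset.sum_range_succ]
  norm_num [Nat.choose_succ_self]
  rw [← Nat.cast_sum, Nat.sum_range_choose]
  simp only [mrow, Nat.add_sub_cancel]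
  push_cast
  ring

lemma hasSum_of_antidiagonal {F : ℕ × ℕ → ℝ} {c : ℕ → ℝ} {S : ℝ}
    (habs : Summable fun k => ∑ p ∈ Finset.HasAntidiagonal.antidiagonal k, |F p|)
    (hfib : ∀ k, ∑ p ∈ Finset.HasAntidiagonal.antidiagonal k, F p = c k)
    (hc : HasSum c S) : HasSum F S := by
  have hsumabs : Summable fun x : Σ n : ℕ, Finset.HasAntidiagonal.antidiagonal n => |F x.2| := by
    apply (summable_sigma_of_nonneg (fun _ => abs_nonneg _)).2
    refine ⟨fun n => (hasSum_fintype _).summable, ?_⟩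
    convert habs with n
    rw [tsum_fintype]
    show ∑ p : Finset.HasAntidiagonal.antidiagonal n, |F ↑p| = _
    exact Finset.sum_coe_sort (Finset.HasAntidiagonal.antidiagonal n) fun p => |F p|
  have hsum2 : Summable fun x : Σ n : ℕ, Finset.HasAntidiagonal.antidiagonal n => F x.2 :=
    summable_abs_iff.mp hsumabs
  have hsumF : Summable F := by
    rw [← Finset.HasAntidiagonal.sigmaAntidiagonalEquivProd.summable_iff]
    exact hsum2
  have hFS : HasSum F (∑' p, F p) := hsumF.hasSum
  have hsig : HasSum (fun x : Σ n : ℕ, Finset.HasAntidiagonal.antidiagonal n => F x.2) (∑' p, F p) :=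
    (Equiv.hasSum_iff Finset.HasAntidiagonal.sigmaAntidiagonalEquivProd).2 hFS
  have hcc : HasSum c (∑' p, F p) := by
    apply hsig.sigma
    intro n
    have : HasSum (fun p : Finset.HasAntidiagonal.antidiagonal n => F p) (∑ p ∈ (Finset.HasAntidiagonal.antidiagonal n).attach, F p) :=
      hasSum_fintype _
    rwa [Finset.sum_attach, hfib n] at this
  rwa [← hc.unique hcc] at hFS

lemma choose2 (n : ℕ) : ((n + 2).choose 2 : ℝ) * 2 = ((n:ℝ) + 2) * ((n:ℝ) + 1) := by
  have h := Nat.add_one_mul_choose_eq (n + 1) 1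
  rw [Nat.choose_one_right] at h
  exact_mod_cast h.symm

lemma choose3 (n : ℕ) : ((n + 3).choose 3 : ℝ) * 6 = ((n:ℝ) + 3) * ((n:ℝ) + 2) * ((n:ℝ) + 1) := by
  have h := Nat.add_one_mul_choose_eq (n + 2) 2
  have h1 : ((n:ℝ) + 3) * ((n+2).choose 2 : ℝ) = ((n+3).choose 3 : ℝ) * 3 := by
    exact_mod_cast h
  have h2 := choose2 n
  linear_combination (-2 : ℝ) * h1 + ((n:ℝ) + 3) * h2

lemma seriesH1 {r : ℝ} (hr : |r| < 1) :
    HasSum (fun n : ℕ => ((n:ℝ) + 1) * r ^ n) (1 / (1 - r) ^ 2) := by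
  have h := hasSum_choose_mul_geometric_of_norm_lt_one 1 (by simpa using hr : ‖r‖ < 1)
  have e : (fun n : ℕ => (((n + 1).choose 1 : ℕ) : ℝ) * r ^ n)
      = fun n : ℕ => ((n:ℝ) + 1) * r ^ n := by
    funext n; rw [Nat.choose_one_right]; push_cast; ring
  rw [e] at h
  convert h using 2

lemma seriesH2 {r : ℝ} (hr : |r| < 1) :
    HasSum (fun n : ℕ => ((n:ℝ) + 1) * ((n:ℝ) + 2) * r ^ n) (2 / (1 - r) ^ 3) := by
  have h := (hasSum_choose_mul_geometric_of_norm_lt_one 2 (by simpa using hr : ‖r‖ < 1)).mul_left 2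
  have e : (fun n : ℕ => 2 * ((((n + 2).choose 2 : ℕ) : ℝ) * r ^ n))
      = fun n : ℕ => ((n:ℝ) + 1) * ((n:ℝ) + 2) * r ^ n := by
    funext n
    linear_combination r ^ n * choose2 n
  rw [e] at h
  have : (2:ℝ) * (1 / (1 - r) ^ (2 + 1)) = 2 / (1 - r) ^ 3 := by ring
  rwa [this] at h

lemma seriesH3 {r : ℝ} (hr : |r| < 1) :
    HasSum (fun n : ℕ => ((n:ℝ) + 1) * ((n:ℝ) + 2) * ((n:ℝ) + 3) * r ^ n) (6 / (1 - r) ^ 4) := by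
  have h := (hasSum_choose_mul_geometric_of_norm_lt_one 3 (by simpa using hr : ‖r‖ < 1)).mul_left 6
  have e : (fun n : ℕ => 6 * ((((n + 3).choose 3 : ℕ) : ℝ) * r ^ n))
      = fun n : ℕ => ((n:ℝ) + 1) * ((n:ℝ) + 2) * ((n:ℝ) + 3) * r ^ n := by
    funext n
    linear_combination r ^ n * choose3 n
  rw [e] at h
  have : (6:ℝ) * (1 / (1 - r) ^ (3 + 1)) = 6 / (1 - r) ^ 4 := by ring
  rwa [this] at h

lemma mrow_succ (n : ℕ) : mrow (n + 1) = ((n:ℝ) + 1) * 2 ^ n / 3 ^ (n + 2) := by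
  simp only [mrow, Nat.add_sub_cancel]
  push_cast
  ring

lemma mrow_zero : mrow 0 = 0 := by simp [mrow]

lemma hasSum_c1 {u : ℝ} (hu : |u| < 3 / 2) :
    HasSum (fun k : ℕ => mrow k * u ^ k) (u / (2 * u - 3) ^ 2) := by
  have hr : |2 * u / 3| < 1 := by
    rw [show 2 * u / 3 = (2 / 3) * u by ring, abs_mul, abs_of_pos (by norm_num : (0:ℝ) < 2/3)]
    linarith
  have H := (seriesH1 hr).mul_left (u / 9)
  have e : (fun n : ℕ => u / 9 * (((n:ℝ) + 1) * (2 * u / 3) ^ n))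
      = fun n : ℕ => mrow (n + 1) * u ^ (n + 1) := by
    funext n
    rw [mrow_succ, div_pow, mul_pow]
    ring
  rw [e] at H
  have H2 := (hasSum_nat_add_iff (f := fun k : ℕ => mrow k * u ^ k) 1).1 H
  have hne : (2 * u - 3) ≠ 0 := by
    have := abs_lt.mp hu
    intro h; linarith [this.2]
  have hne2 : (1 - 2 * u / 3) ≠ 0 := by
    intro h; apply hne; linarith
  rw [Finset.sum_range_one, mrow_zero] at H2
  simp only [zero_mul, add_zero] at H2
  have hval : u / 9 * (1 / (1 - 2 * u / 3) ^ 2) = u / (2 * u - 3) ^ 2 := by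
    have h1 : (1 - 2 * u / 3) ^ 2 = (2 * u - 3) ^ 2 / 9 := by ring
    rw [h1, one_div_div, div_mul_div_comm, mul_comm u 9,
        mul_div_mul_left _ _ (by norm_num : (9:ℝ) ≠ 0)]
  rwa [hval] at H2

lemma hasSum_c3 : HasSum (fun k : ℕ => ((k:ℝ) - 1) * mrow k) 4 := by
  have hr : |(2:ℝ)/3| < 1 := by rw [abs_of_pos (by norm_num)]; norm_num
  have B := ((seriesH2 hr).sub ((seriesH1 hr).mul_left 2)).mul_left (1/9 : ℝ)
  have hv : (1/9 : ℝ) * (2 / (1 - 2/3) ^ 3 - 2 * (1 / (1 - 2/3) ^ 2)) = 4 := by norm_num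
  rw [hv] at B
  have e : (fun n : ℕ => (1/9 : ℝ) * (((n:ℝ)+1)*((n:ℝ)+2)*((2:ℝ)/3)^n - 2*(((n:ℝ)+1)*((2:ℝ)/3)^n)))
      = fun n : ℕ => (((n+1 : ℕ):ℝ) - 1) * mrow (n+1) := by
    funext n
    rw [mrow_succ, div_pow]
    push_cast
    ring
  rw [e] at B
  have H2 := (hasSum_nat_add_iff (f := fun k : ℕ => ((k:ℝ) - 1) * mrow k) 1).1 B
  simpa [mrow_zero] using H2

lemma hasSum_c4 : HasSum (fun k : ℕ => (((k:ℝ) - 1) - 4) ^ 2 * mrow k) 12 := by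
  have hr : |(2:ℝ)/3| < 1 := by rw [abs_of_pos (by norm_num)]; norm_num
  have B := (((seriesH3 hr).sub ((seriesH2 hr).mul_left 13)).add
    ((seriesH1 hr).mul_left 36)).mul_left (1/9 : ℝ)
  have hv : (1/9 : ℝ) * (6 / (1 - 2/3) ^ 4 - 13 * (2 / (1 - 2/3) ^ 3) + 36 * (1 / (1 - 2/3) ^ 2))
      = 12 := by norm_num
  rw [hv] at B
  have e : (fun n : ℕ => (1/9 : ℝ) * (((n:ℝ)+1)*((n:ℝ)+2)*((n:ℝ)+3)*((2:ℝ)/3)^n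
        - 13*(((n:ℝ)+1)*((n:ℝ)+2)*((2:ℝ)/3)^n) + 36*(((n:ℝ)+1)*((2:ℝ)/3)^n)))
      = fun n : ℕ => ((((n+1 : ℕ):ℝ) - 1) - 4) ^ 2 * mrow (n+1) := by
    funext n
    rw [mrow_succ, div_pow]
    push_cast
    ring
  rw [e] at B
  have H2 := (hasSum_nat_add_iff (f := fun k : ℕ => (((k:ℝ) - 1) - 4) ^ 2 * mrow k) 1).1 B
  simpa [mrow_zero] using H2

lemma fiber_mul_right (k : ℕ) (g : ℕ → ℝ) :
    ∑ p ∈ Finset.HasAntidiagonal.antidiagonal k, motzkinLimit p.1 p.2 * g (p.1 + p.2) = mrow k * g k := by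
  rw [Finset.sum_congr rfl fun p hp => by rw [Finset.HasAntidiagonal.mem_antidiagonal.mp hp],
    ← Finset.sum_mul, antidiag_motzkin_sum]

lemma fiber3 (k : ℕ) :
    ∑ p ∈ Finset.HasAntidiagonal.antidiagonal k, (((p.1:ℝ) + (p.2:ℝ)) - 1) * motzkinLimit p.1 p.2
      = ((k:ℝ) - 1) * mrow k := by
  have h : ∀ p ∈ Finset.HasAntidiagonal.antidiagonal k, (((p.1:ℝ) + (p.2:ℝ)) - 1) * motzkinLimit p.1 p.2
      = ((k:ℝ) - 1) * motzkinLimit p.1 p.2 := by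
    intro p hp
    have h2 : ((p.1:ℝ) + (p.2:ℝ)) = (k:ℝ) := by exact_mod_cast Finset.HasAntidiagonal.mem_antidiagonal.mp hp
    rw [h2]
  rw [Finset.sum_congr rfl h, ← Finset.mul_sum, antidiag_motzkin_sum]

lemma fiber4 (k : ℕ) :
    ∑ p ∈ Finset.HasAntidiagonal.antidiagonal k, ((((p.1:ℝ) + (p.2:ℝ)) - 1) - 4) ^ 2 * motzkinLimit p.1 p.2
      = (((k:ℝ) - 1) - 4) ^ 2 * mrow k := by
  have h : ∀ p ∈ Finset.HasAntidiagonal.antidiagonal k, ((((p.1:ℝ) + (p.2:ℝ)) - 1) - 4) ^ 2 * motzkinLimit p.1 p.2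
      = (((k:ℝ) - 1) - 4) ^ 2 * motzkinLimit p.1 p.2 := by
    intro p hp
    have h2 : ((p.1:ℝ) + (p.2:ℝ)) = (k:ℝ) := by exact_mod_cast Finset.HasAntidiagonal.mem_antidiagonal.mp hp
    rw [h2]
  rw [Finset.sum_congr rfl h, ← Finset.mul_sum, antidiag_motzkin_sum]

lemma nonneg3 (p : ℕ × ℕ) : 0 ≤ (((p.1:ℝ) + (p.2:ℝ)) - 1) * motzkinLimit p.1 p.2 := by
  obtain ⟨i, j⟩ := p
  rcases Nat.eq_zero_or_pos (i + j) with h | h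
  · obtain ⟨rfl, rfl⟩ : i = 0 ∧ j = 0 := by omega
    simp [motzkinLimit]
  · refine mul_nonneg ?_ (motzkinLimit_nonneg _ _)
    have h2 : (1:ℝ) ≤ (i:ℝ) + (j:ℝ) := by exact_mod_cast h
    linarith


/-- Under the limiting joint PGF `v/(u+v-3)^2` for Motzkin paths, the sum
`DEG + UNP` has PGF `u/(2u-3)^2`, the PGF of `1 + NB(2,1/3)`; hence
`CHN = DEG + UNP - 1 ~ NB(2,1/3)` with mean 4 and variance 12. -/
theorem stmt8 :
    (∀ u : ℝ, |u| < 3 / 2 →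
      HasSum (fun p : ℕ × ℕ => motzkinLimit p.1 p.2 * u ^ (p.1 + p.2))
        (u / (2 * u - 3) ^ 2)) ∧
    (∀ u : ℝ, |u| < 3 / 2 →
      u / (2 * u - 3) ^ 2 = u * ((1 / 3) / (1 - (2 / 3) * u)) ^ 2) ∧
    (∑' p : ℕ × ℕ, (((p.1 : ℝ) + (p.2 : ℝ)) - 1) * motzkinLimit p.1 p.2) = 4 ∧
    (∑' p : ℕ × ℕ, ((((p.1 : ℝ) + (p.2 : ℝ)) - 1) - 4) ^ 2 * motzkinLimit p.1 p.2)
      = 12 := by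
  refine ⟨?_, ?_, ?_, ?_⟩
  · intro u hu
    refine hasSum_of_antidiagonal ?_ (fun k => fiber_mul_right k (fun m => u ^ m)) (hasSum_c1 hu)
    have hs := (hasSum_c1 (u := |u|) (by rwa [abs_abs])).summable
    have e : (fun k => ∑ p ∈ Finset.HasAntidiagonal.antidiagonal k, |motzkinLimit p.1 p.2 * u ^ (p.1 + p.2)|)
        = fun k => mrow k * |u| ^ k := by
      funext k
      rw [← fiber_mul_right k fun m => |u| ^ m]
      exact Finset.sum_congr rfl fun p _ => by
        rw [abs_mul, abs_of_nonneg (motzkinLimit_nonneg _ _), abs_pow]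
    rw [e]; exact hs
  · intro u hu
    rw [div_div, show (3:ℝ) * (1 - 2 / 3 * u) = 3 - 2 * u from by ring, div_pow, one_pow,
      mul_one_div, show ((3:ℝ) - 2 * u) ^ 2 = (2 * u - 3) ^ 2 from by ring]
  · refine HasSum.tsum_eq (hasSum_of_antidiagonal ?_ fiber3 hasSum_c3)
    have e : (fun k : ℕ => ∑ p ∈ Finset.HasAntidiagonal.antidiagonal k,
          |(((p.1:ℝ) + (p.2:ℝ)) - 1) * motzkinLimit p.1 p.2|)
        = fun k : ℕ => ((k:ℝ) - 1) * mrow k := by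
      funext k
      rw [← fiber3 k]
      exact Finset.sum_congr rfl fun p _ => abs_of_nonneg (nonneg3 p)
    rw [e]; exact hasSum_c3.summable
  · refine HasSum.tsum_eq (hasSum_of_antidiagonal ?_ fiber4 hasSum_c4)
    have e : (fun k : ℕ => ∑ p ∈ Finset.HasAntidiagonal.antidiagonal k,
          |((((p.1:ℝ) + (p.2:ℝ)) - 1) - 4) ^ 2 * motzkinLimit p.1 p.2|)
        = fun k : ℕ => (((k:ℝ) - 1) - 4) ^ 2 * mrow k := by
      funext k
      rw [← fiber4 k]
      exact Finset.sum_congr rfl fun p _ =>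
        abs_of_nonneg (mul_nonneg (sq_nonneg _) (motzkinLimit_nonneg _ _))
    rw [e]; exact hasSum_c4.summable
end

section
/- For each fixed k ≥ 1, the proportion of Dyck paths of semilength n whose lowest valley has height k-1 (equivalently, whose first helix has length k, i.e. the first k up-steps are matched with the last k down-steps maximally) converges as n → ∞ to (3/4)·(1/4)^{k-1}. Hence the depth is distributed as 1 + NB(1, 3/4) = 1 + Geometric(3/4), with mean 4/3 and variance 4/9. -/
open Filter Topology

/-- Height (final) of a Dyck-path prefix given as a list of steps:
`true` = up step, `false` = down step. -/
def dyckHeight (l : List Bool) : ℤ := (l.count true : ℤ) - (l.count false : ℤ)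

/-- A Dyck word: ends at height 0 and every prefix has nonnegative height. -/
def IsDyckWord (l : List Bool) : Prop :=
  dyckHeight l = 0 ∧ ∀ p ∈ l.inits, 0 ≤ dyckHeight p

/-- Number of mountains of a Dyck path = number of returns to the x-axis
at a positive position. -/
def dyckMountains (l : List Bool) : ℕ :=
  (List.range (l.length + 1)).countP (fun i => decide (0 < i ∧ dyckHeight (l.take i) = 0))

/-- Number of Dyck paths of semilength `n` with exactly `k` mountains. -/
noncomputable def dyckCount (n k : ℕ) : ℕ :=
  Nat.card {l : List Bool // l.length = 2 * n ∧ IsDyckWord l ∧ dyckMountains l = k}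

/-- The depth (first-helix length) of a Dyck path: the largest `k` such that the
path starts with `k` nested stacked matched pairs around a Dyck word, followed
by a Dyck word. -/
noncomputable def dyckDepth (l : List Bool) : ℕ :=
  sSup {k | ∃ m r : List Bool, IsDyckWord m ∧ IsDyckWord r ∧
    l = List.replicate k true ++ m ++ List.replicate k false ++ r}

/-- Number of Dyck paths of semilength `n` with depth `k`. -/
noncomputable def dyckDepthCount (n k : ℕ) : ℕ :=
  Nat.card {l : List Bool // l.length = 2 * n ∧ IsDyckWord l ∧ dyckDepth l = k}

lemma isDyckWord_iff (l : List Bool) : IsDyckWord l ↔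
    l.count true = l.count false ∧
      ∀ i, (l.take i).count false ≤ (l.take i).count true := by
  unfold IsDyckWord dyckHeight
  constructor
  · rintro ⟨h0, h1⟩
    refine ⟨by omega, fun i => ?_⟩
    have := h1 _ ((List.mem_inits _ _).2 (List.take_prefix i l))
    omega
  · rintro ⟨h0, h1⟩
    refine ⟨by omega, fun p hp => ?_⟩
    have hpre := (List.mem_inits _ _).1 hp
    have hp' := List.prefix_iff_eq_take.1 hpre
    have := h1 p.length
    rw [← hp'] at this
    omega

lemma count_true_add_count_false (l : List Bool) :
    l.count true + l.count false = l.length := by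
  induction l with
  | nil => simp
  | cons b t ih => cases b <;> simp [List.count_cons] <;> omega

lemma IsDyckWord.length_eq (l : List Bool) (h : IsDyckWord l) :
    l.length = 2 * l.count true := by
  have h1 := (isDyckWord_iff l).1 h |>.1
  have := count_true_add_count_false l
  omega

lemma IsDyckWord.append {p q : List Bool} (hp : IsDyckWord p) (hq : IsDyckWord q) :
    IsDyckWord (p ++ q) := by
  rw [isDyckWord_iff] at *
  obtain ⟨hp0, hp1⟩ := hp
  obtain ⟨hq0, hq1⟩ := hq
  refine ⟨by simp [List.count_append, hp0, hq0], fun i => ?_⟩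
  rw [List.take_append]
  simp only [List.count_append]
  exact add_le_add (hp1 i) (hq1 _)

lemma IsDyckWord.nil : IsDyckWord [] := by rw [isDyckWord_iff]; simp

lemma count_take_le {α : Type*} [DecidableEq α] (l : List α) (i : ℕ) (a : α) :
    (l.take i).count a ≤ l.count a :=
  List.Sublist.count_le a (List.take_sublist i l)

lemma IsDyckWord.nest {m : List Bool} (hm : IsDyckWord m) :
    IsDyckWord (true :: (m ++ [false])) := by
  rw [isDyckWord_iff] at *
  obtain ⟨h0, h1⟩ := hm
  constructor
  · simp [List.count_cons, List.count_append, h0]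
  · intro i
    cases i with
    | zero => simp
    | succ j =>
      rw [List.take_succ_cons]
      simp only [List.count_cons, List.take_append, List.count_append]
      have h2 := h1 j
      have h3 := count_take_le (List.take (j - m.length) [false]) (j - m.length) true
      have h4 : (List.take (j - m.length) [false]).count false ≤ 1 := by
        have := count_take_le [false] (j - m.length) false
        have := List.Sublist.count_le false (List.take_sublist (j - m.length) [false])
        simpa using this
      have h5 : (List.take (j - m.length) [false]).count true = 0 := by
        have := List.Sublist.count_le true (List.take_sublist (j - m.length) [false])
        simpa using this
      simp [h5]
      omega

lemma rep_succ_form (k : ℕ) (m r : List Bool) :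
    List.replicate (k+1) true ++ m ++ List.replicate (k+1) false ++ r =
    List.replicate k true ++ (true :: (m ++ [false])) ++ List.replicate k false ++ r := by
  rw [List.replicate_succ' (n := k) (a := true), List.replicate_succ (n := k) (a := false)]
  simp [List.append_assoc]

lemma IsDyckWord.repNest {m r : List Bool} (hm : IsDyckWord m) (hr : IsDyckWord r) (k : ℕ) :
    IsDyckWord (List.replicate k true ++ m ++ List.replicate k false ++ r) := by
  induction k generalizing m with
  | zero => simpa using hm.append hr
  | succ j ih =>
    rw [rep_succ_form]
    exact ih hm.nest

lemma helix_aux {k : ℕ} (hk : 1 ≤ k) {m m' r r' : List Bool}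
    (hm : IsDyckWord m) (hm' : IsDyckWord m') (hlen : m.length ≤ m'.length)
    (h : m ++ (List.replicate k false ++ r) = m' ++ (List.replicate k false ++ r')) :
    m = m' := by
  have hp : m <+: m' :=
    List.prefix_of_prefix_length_le (h ▸ List.prefix_append m _) (List.prefix_append m' _) hlen
  obtain ⟨t, ht⟩ := hp
  cases t with
  | nil => simpa using ht
  | cons b t' =>
    exfalso
    rw [← ht, List.append_assoc] at h
    have h2 := List.append_cancel_left h
    obtain ⟨j, rfl⟩ : ∃ j, k = j + 1 := ⟨k - 1, by omega⟩
    rw [List.replicate_succ] at h2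
    simp only [List.cons_append] at h2
    have hb : b = false := (List.cons_eq_cons.1 h2.symm).1
    subst hb
    have hpre : (m ++ [false]) <+: m' := by
      rw [← ht]
      exact ⟨t', by simp⟩
    have h3 := hm'.2 _ ((List.mem_inits _ _).2 hpre)
    have h4 : dyckHeight (m ++ [false]) = -1 := by
      unfold dyckHeight at *
      have := hm.1
      unfold dyckHeight at this
      simp [List.count_append]
      omega
    omega

lemma helix_unique {k : ℕ} (hk : 1 ≤ k) {m m' r r' : List Bool}
    (hm : IsDyckWord m) (hm' : IsDyckWord m') (hr : IsDyckWord r) (hr' : IsDyckWord r')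
    (h : List.replicate k true ++ m ++ List.replicate k false ++ r =
         List.replicate k true ++ m' ++ List.replicate k false ++ r') :
    m = m' ∧ r = r' := by
  simp only [List.append_assoc] at h
  have h1 := List.append_cancel_left h
  have hmm : m = m' := by
    rcases le_total m.length m'.length with hle | hle
    · exact helix_aux hk hm hm' hle h1
    · exact (helix_aux hk hm' hm hle h1.symm).symm
  subst hmm
  have h2 := List.append_cancel_left (List.append_cancel_left h)
  exact ⟨rfl, List.append_cancel_left h2⟩

def HasHelix (k : ℕ) (l : List Bool) : Prop :=
  ∃ m r : List Bool, IsDyckWord m ∧ IsDyckWord r ∧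
    l = List.replicate k true ++ m ++ List.replicate k false ++ r

lemma HasHelix.of_succ {k : ℕ} {l : List Bool} (h : HasHelix (k+1) l) : HasHelix k l := by
  obtain ⟨m, r, hm, hr, rfl⟩ := h
  exact ⟨true :: (m ++ [false]), r, hm.nest, hr, rep_succ_form k m r⟩

lemma HasHelix.mono {i j : ℕ} {l : List Bool} (hij : i ≤ j) (h : HasHelix j l) :
    HasHelix i l := by
  induction j with
  | zero => exact Nat.le_zero.1 hij ▸ h
  | succ j ih =>
    rcases Nat.lt_or_ge i (j+1) with hlt | hge
    · exact ih (Nat.lt_succ_iff.1 hlt) h.of_succ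
    · exact (Nat.le_antisymm hij hge) ▸ h

lemma HasHelix.zero {l : List Bool} (h : IsDyckWord l) : HasHelix 0 l :=
  ⟨[], l, IsDyckWord.nil, h, by simp⟩

lemma HasHelix.length_le {k : ℕ} {l : List Bool} (h : HasHelix k l) : 2 * k ≤ l.length := by
  obtain ⟨m, r, hm, hr, rfl⟩ := h
  simp [List.length_append, List.length_replicate]
  omega

lemma dyckDepth_set_eq (l : List Bool) :
    {k | ∃ m r : List Bool, IsDyckWord m ∧ IsDyckWord r ∧
      l = List.replicate k true ++ m ++ List.replicate k false ++ r} = {k | HasHelix k l} := rfl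

lemma dyckDepth_eq_iff {l : List Bool} (hl : IsDyckWord l) (k : ℕ) :
    dyckDepth l = k ↔ HasHelix k l ∧ ¬ HasHelix (k+1) l := by
  rw [dyckDepth, dyckDepth_set_eq]
  have hbdd : BddAbove {k | HasHelix k l} := by
    refine ⟨l.length, fun j hj => ?_⟩
    have := HasHelix.length_le hj
    omega
  have hne : {k | HasHelix k l}.Nonempty := ⟨0, HasHelix.zero hl⟩
  constructor
  · rintro rfl
    refine ⟨Nat.sSup_mem hne hbdd, fun hc => ?_⟩
    have := le_csSup hbdd hc
    omega
  · rintro ⟨h1, h2⟩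
    refine IsGreatest.csSup_eq ⟨h1, fun j hj => ?_⟩
    by_contra hc
    exact h2 (hj.mono (by omega))

open DyckStep in
def boolToStep : Bool → DyckStep := fun b => if b then U else D

open DyckStep in
def stepToBool : DyckStep → Bool := fun s => match s with | U => true | D => false

lemma boolToStep_inj : Function.Injective boolToStep := by
  intro a b h
  cases a <;> cases b <;> simp [boolToStep] at h ⊢

lemma stepToBool_inj : Function.Injective stepToBool := by
  intro a b h
  cases a <;> cases b <;> simp [stepToBool] at h ⊢

open DyckStep in
lemma count_map_bool (l : List Bool) :
    (l.map boolToStep).count U = l.count true ∧ (l.map boolToStep).count D = l.count false := by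
  constructor
  · simpa [boolToStep] using List.count_map_of_injective l boolToStep boolToStep_inj true
  · simpa [boolToStep] using List.count_map_of_injective l boolToStep boolToStep_inj false

open DyckStep in
lemma count_map_step (l : List DyckStep) :
    (l.map stepToBool).count true = l.count U ∧ (l.map stepToBool).count false = l.count D := by
  constructor
  · simpa [stepToBool] using List.count_map_of_injective l stepToBool stepToBool_inj U
  · simpa [stepToBool] using List.count_map_of_injective l stepToBool stepToBool_inj D

def toDyckWord (l : List Bool) (h : IsDyckWord l) : DyckWord where
  toList := l.map boolToStep
  count_U_eq_count_D := by
    rw [(count_map_bool l).1, (count_map_bool l).2]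
    exact ((isDyckWord_iff l).1 h).1
  count_D_le_count_U i := by
    rw [← List.map_take, (count_map_bool _).1, (count_map_bool _).2]
    exact ((isDyckWord_iff l).1 h).2 i

lemma toDyckWord_semilength (l : List Bool) (h : IsDyckWord l) :
    (toDyckWord l h).semilength = l.count true := by
  rw [DyckWord.semilength]
  exact (count_map_bool l).1

lemma isDyckWord_of_dyckWord (p : DyckWord) : IsDyckWord (p.toList.map stepToBool) := by
  rw [isDyckWord_iff]
  constructor
  · rw [(count_map_step _).1, (count_map_step _).2]
    exact p.count_U_eq_count_D
  · intro i
    rw [← List.map_take, (count_map_step _).1, (count_map_step _).2]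
    exact p.count_D_le_count_U i

lemma map_map_bool (l : List Bool) : (l.map boolToStep).map stepToBool = l := by
  rw [List.map_map]
  have : stepToBool ∘ boolToStep = id := by
    funext b; cases b <;> rfl
  simp [this]

lemma map_map_step (l : List DyckStep) : (l.map stepToBool).map boolToStep = l := by
  rw [List.map_map]
  have : boolToStep ∘ stepToBool = id := by
    funext s; cases s <;> rfl
  simp [this]

lemma count_true_of_dyckWord (p : DyckWord) :
    (p.toList.map stepToBool).count true = p.semilength := (count_map_step _).1

/-- Equiv between bool-list Dyck words of length 2n and DyckWords of semilength n. -/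
noncomputable def dyckEquiv (n : ℕ) :
    {l : List Bool // l.length = 2 * n ∧ IsDyckWord l} ≃ {p : DyckWord // p.semilength = n} where
  toFun x := ⟨toDyckWord x.1 x.2.2, by
    rw [toDyckWord_semilength]
    have := x.2.2.length_eq
    have := x.2.1
    omega⟩
  invFun y := ⟨y.1.toList.map stepToBool, by
    refine ⟨?_, isDyckWord_of_dyckWord y.1⟩
    rw [List.length_map, ← DyckWord.two_mul_semilength_eq_length, y.2]⟩
  left_inv x := by
    ext : 1
    exact map_map_bool x.1
  right_inv y := by
    apply Subtype.ext
    apply DyckWord.ext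
    exact map_map_step y.1.toList

lemma card_dyck_lists (n : ℕ) :
    Nat.card {l : List Bool // l.length = 2 * n ∧ IsDyckWord l} = catalan n := by
  rw [Nat.card_congr (dyckEquiv n), Nat.card_eq_fintype_card,
    DyckWord.card_dyckWord_semilength_eq_catalan]

/-- first-return decomposition equivalence -/
noncomputable def pairEquiv (N : ℕ) :
    {p : DyckWord // p.semilength = N + 1} ≃
      {q : DyckWord × DyckWord // q.1.semilength + q.2.semilength = N} where
  toFun x := ⟨(x.1.insidePart, x.1.outsidePart), by
    have hne : x.1 ≠ 0 := by
      intro h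
      have := x.2
      rw [h] at this
      simp at this
    have := DyckWord.semilength_insidePart_add_semilength_outsidePart_add_one hne
    have := x.2
    dsimp only
    omega⟩
  invFun y := ⟨y.1.1.nest + y.1.2, by
    have := y.2
    simp [DyckWord.semilength_add, DyckWord.semilength_nest]
    omega⟩
  left_inv x := by
    apply Subtype.ext
    have hne : x.1 ≠ 0 := by
      intro h
      have := x.2
      rw [h] at this
      simp at this
    exact DyckWord.nest_insidePart_add_outsidePart hne
  right_inv y := by
    apply Subtype.ext
    have hne : y.1.1.nest ≠ 0 := DyckWord.nest_ne_zero
    have h1 : (y.1.1.nest + y.1.2).insidePart = y.1.1 := by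
      rw [DyckWord.insidePart_add hne, DyckWord.insidePart_nest]
    have h2 : (y.1.1.nest + y.1.2).outsidePart = y.1.2 := by
      rw [DyckWord.outsidePart_add hne, DyckWord.outsidePart_nest, zero_add]
    exact Prod.ext h1 h2

lemma card_pairs_dw (N : ℕ) :
    Nat.card {q : DyckWord × DyckWord // q.1.semilength + q.2.semilength = N} =
      catalan (N + 1) := by
  rw [← Nat.card_congr (pairEquiv N), Nat.card_eq_fintype_card,
    DyckWord.card_dyckWord_semilength_eq_catalan]

/-- bool-list pairs to DyckWord pairs -/
noncomputable def pairBoolEquiv (N : ℕ) :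
    {q : List Bool × List Bool //
        IsDyckWord q.1 ∧ IsDyckWord q.2 ∧ q.1.length + q.2.length = 2 * N} ≃
      {q : DyckWord × DyckWord // q.1.semilength + q.2.semilength = N} where
  toFun x := ⟨(toDyckWord x.1.1 x.2.1, toDyckWord x.1.2 x.2.2.1), by
    rw [toDyckWord_semilength, toDyckWord_semilength]
    have h1 := x.2.1.length_eq
    have h2 := x.2.2.1.length_eq
    have h3 := x.2.2.2
    omega⟩
  invFun y := ⟨(y.1.1.toList.map stepToBool, y.1.2.toList.map stepToBool), by
    refine ⟨isDyckWord_of_dyckWord _, isDyckWord_of_dyckWord _, ?_⟩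
    have := y.2
    simp only [List.length_map, ← DyckWord.two_mul_semilength_eq_length]
    omega⟩
  left_inv x := by
    apply Subtype.ext
    exact Prod.ext (map_map_bool x.1.1) (map_map_bool x.1.2)
  right_inv y := by
    apply Subtype.ext
    exact Prod.ext (DyckWord.ext (map_map_step y.1.1.toList))
      (DyckWord.ext (map_map_step y.1.2.toList))

lemma card_pairs_bool (N : ℕ) :
    Nat.card {q : List Bool × List Bool //
        IsDyckWord q.1 ∧ IsDyckWord q.2 ∧ q.1.length + q.2.length = 2 * N} =
      catalan (N + 1) := by
  rw [Nat.card_congr (pairBoolEquiv N), card_pairs_dw]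

lemma card_helix (n k : ℕ) (hk : 1 ≤ k) (hkn : k ≤ n) :
    Nat.card {l : List Bool // l.length = 2 * n ∧ IsDyckWord l ∧ HasHelix k l} =
      catalan (n - k + 1) := by
  set f : {q : List Bool × List Bool //
      IsDyckWord q.1 ∧ IsDyckWord q.2 ∧ q.1.length + q.2.length = 2 * (n - k)} →
      {l : List Bool // l.length = 2 * n ∧ IsDyckWord l ∧ HasHelix k l} :=
    fun q => ⟨List.replicate k true ++ q.1.1 ++ List.replicate k false ++ q.1.2, by
      refine ⟨?_, q.2.1.repNest q.2.2.1 k, q.1.1, q.1.2, q.2.1, q.2.2.1, rfl⟩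
      have := q.2.2.2
      simp only [List.length_append, List.length_replicate]
      omega⟩ with hf
  have hbij : Function.Bijective f := by
    constructor
    · rintro ⟨⟨a, b⟩, ha, hb, hab⟩ ⟨⟨c, d⟩, hc, hd, hcd⟩ h
      have h' := Subtype.ext_iff.1 h
      simp only [hf] at h'
      obtain ⟨h1, h2⟩ := helix_unique hk ha hc hb hd h'
      apply Subtype.ext
      exact Prod.ext h1 h2
    · rintro ⟨l, hlen, hld, m, r, hm, hr, rfl⟩
      refine ⟨⟨(m, r), hm, hr, ?_⟩, Subtype.ext rfl⟩
      simp only [List.length_append, List.length_replicate] at hlen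
      show m.length + r.length = 2 * (n - k)
      omega
  rw [← Nat.card_eq_of_bijective f hbij, card_pairs_bool]

lemma card_helix_empty (n k : ℕ) (hkn : n < k) :
    Nat.card {l : List Bool // l.length = 2 * n ∧ IsDyckWord l ∧ HasHelix k l} = 0 := by
  have : IsEmpty {l : List Bool // l.length = 2 * n ∧ IsDyckWord l ∧ HasHelix k l} := by
    refine ⟨fun x => ?_⟩
    have := x.2.2.2.length_le
    rw [x.2.1] at this
    omega
  exact Nat.card_of_isEmpty

lemma dyckDepthCount_eq (n k : ℕ) (hk : 1 ≤ k) (hkn : k + 1 ≤ n) :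
    dyckDepthCount n k = catalan (n - k + 1) - catalan (n - k) := by
  set A : Set (List Bool) := {l | l.length = 2 * n ∧ IsDyckWord l ∧ HasHelix k l} with hA
  set B : Set (List Bool) := {l | l.length = 2 * n ∧ IsDyckWord l ∧ HasHelix (k+1) l} with hB
  have hBA : B ⊆ A := by
    rintro l ⟨h1, h2, h3⟩
    exact ⟨h1, h2, h3.of_succ⟩
  have hAfin : A.Finite := by
    apply Set.Finite.subset (List.finite_length_eq Bool (2 * n))
    rintro l ⟨h1, -⟩
    exact h1
  have hset : {l : List Bool | l.length = 2 * n ∧ IsDyckWord l ∧ dyckDepth l = k} = A \ B := by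
    ext l
    simp only [Set.mem_setOf_eq, Set.mem_diff, hA, hB]
    constructor
    · rintro ⟨h1, h2, h3⟩
      rw [dyckDepth_eq_iff h2] at h3
      exact ⟨⟨h1, h2, h3.1⟩, fun hc => h3.2 hc.2.2⟩
    · rintro ⟨⟨h1, h2, h3⟩, h4⟩
      refine ⟨h1, h2, (dyckDepth_eq_iff h2 k).2 ⟨h3, fun hc => h4 ⟨h1, h2, hc⟩⟩⟩
  have e1 : Nat.card {l : List Bool // l.length = 2 * n ∧ IsDyckWord l ∧ dyckDepth l = k} =
      ({l : List Bool | l.length = 2 * n ∧ IsDyckWord l ∧ dyckDepth l = k}).ncard :=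
    Nat.card_coe_set_eq _
  have hcard : dyckDepthCount n k = (A \ B).ncard := by
    rw [dyckDepthCount, e1, hset]
  rw [hcard, Set.ncard_diff hBA (hAfin.subset hBA)]
  have h1 : A.ncard = catalan (n - k + 1) :=
    (Nat.card_coe_set_eq _).symm.trans (card_helix n k hk (by omega))
  have h2 : B.ncard = catalan (n - (k+1) + 1) :=
    (Nat.card_coe_set_eq _).symm.trans (card_helix n (k+1) (by omega) hkn)
  rw [h1, h2]
  have : n - (k+1) + 1 = n - k := by omega
  rw [this]

lemma catalan_pos' (n : ℕ) : 0 < catalan n := by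
  rcases Nat.eq_zero_or_pos (catalan n) with h | h
  · exfalso
    have he := succ_mul_catalan_eq_centralBinom n
    rw [h, Nat.mul_zero] at he
    have := n.centralBinom_pos
    omega
  · exact h

lemma catalan_mono_succ (n : ℕ) : catalan n ≤ catalan (n + 1) := by
  rw [catalan_succ]
  have hmem : (⟨n, Nat.lt_succ_self n⟩ : Fin n.succ) ∈ Finset.univ := Finset.mem_univ _
  calc catalan n = catalan n * catalan (n - n) := by simp
    _ ≤ ∑ i : Fin n.succ, catalan i * catalan (n - i) :=
        Finset.single_le_sum (f := fun i : Fin n.succ => catalan i * catalan (n - i))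
          (fun i _ => Nat.zero_le _) hmem

lemma catalan_ratio (n : ℕ) : (n + 2) * catalan (n + 1) = 2 * (2 * n + 1) * catalan n := by
  have h1 := succ_mul_catalan_eq_centralBinom (n + 1)
  have h2 := Nat.succ_mul_centralBinom_succ n
  have h3 := succ_mul_catalan_eq_centralBinom n
  have key : (n + 1) * ((n + 2) * catalan (n + 1)) = (n + 1) * (2 * (2 * n + 1) * catalan n) := by
    calc (n + 1) * ((n + 2) * catalan (n + 1)) = (n + 1) * ((n + 1 + 1) * catalan (n + 1)) := by
          ring_nf
      _ = (n + 1) * (n + 1).centralBinom := by rw [h1]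
      _ = 2 * (2 * n + 1) * n.centralBinom := h2
      _ = 2 * (2 * n + 1) * ((n + 1) * catalan n) := by rw [h3]
      _ = (n + 1) * (2 * (2 * n + 1) * catalan n) := by ring
  exact Nat.eq_of_mul_eq_mul_left (by omega) key

lemma catalan_ratio_real (n : ℕ) :
    (catalan n : ℝ) / catalan (n + 1) = ((n : ℝ) + 2) / (2 * (2 * n + 1)) := by
  have h := catalan_ratio n
  have hc1 : (0:ℝ) < catalan (n + 1) := by exact_mod_cast catalan_pos' (n + 1)
  have hc : (catalan (n+1) : ℝ) ≠ 0 := ne_of_gt hc1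
  have hd : (2 * (2 * (n:ℝ) + 1)) ≠ 0 := by positivity
  have hcast : ((n : ℝ) + 2) * catalan (n + 1) = 2 * (2 * n + 1) * catalan n := by
    exact_mod_cast h
  rw [div_eq_div_iff hc hd]
  linear_combination -hcast

lemma tendsto_catalan_ratio :
    Filter.Tendsto (fun n : ℕ => (catalan n : ℝ) / catalan (n + 1)) Filter.atTop (nhds (1/4)) := by
  have h1 : Filter.Tendsto (fun n : ℕ => ((1:ℝ) + 2 * (1/n)) / (4 + 2 * (1/n)))
      Filter.atTop (nhds (1/4)) := by
    have hz := tendsto_one_div_atTop_nhds_zero_nat (𝕜 := ℝ)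
    have hnum : Filter.Tendsto (fun n : ℕ => (1:ℝ) + 2 * (1/n)) Filter.atTop (nhds 1) := by
      have := (hz.const_mul (2:ℝ)).const_add (1:ℝ)
      simpa using this
    have hden : Filter.Tendsto (fun n : ℕ => (4:ℝ) + 2 * (1/n)) Filter.atTop (nhds 4) := by
      have := (hz.const_mul (2:ℝ)).const_add (4:ℝ)
      simpa using this
    have := hnum.div hden (by norm_num)
    exact this
  refine Filter.Tendsto.congr' ?_ h1
  filter_upwards [Filter.eventually_ge_atTop 1] with n hn
  have hn0 : (n:ℝ) ≠ 0 := by positivity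
  rw [catalan_ratio_real, div_eq_div_iff (ne_of_gt (by positivity)) (ne_of_gt (by positivity))]
  field_simp
  ring

lemma tendsto_catalan_shift (j : ℕ) :
    Filter.Tendsto (fun n : ℕ => (catalan n : ℝ) / catalan (n + j)) Filter.atTop
      (nhds ((1/4 : ℝ)^j)) := by
  induction j with
  | zero =>
    have : (fun n : ℕ => (catalan n : ℝ) / catalan (n + 0)) = fun _ => 1 := by
      funext n
      have : (catalan n : ℝ) ≠ 0 := by exact_mod_cast (catalan_pos' n).ne'
      simp [div_self this]
    rw [this]
    simpa using tendsto_const_nhds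
  | succ j ih =>
    have h2 : Filter.Tendsto (fun n : ℕ => (catalan (n + j) : ℝ) / catalan (n + j + 1))
        Filter.atTop (nhds (1/4)) :=
      tendsto_catalan_ratio.comp (Filter.tendsto_add_atTop_nat j)
    have h3 := ih.mul h2
    have heq : (fun n : ℕ => (catalan n : ℝ) / catalan (n + j) *
        ((catalan (n + j) : ℝ) / catalan (n + j + 1))) =
        fun n : ℕ => (catalan n : ℝ) / catalan (n + (j + 1)) := by
      funext n
      have hne : (catalan (n + j) : ℝ) ≠ 0 := by exact_mod_cast (catalan_pos' (n + j)).ne'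
      rw [div_mul_div_cancel₀ hne]
      norm_num [Nat.add_assoc]
    rw [heq] at h3
    rw [pow_succ]
    exact h3

lemma tendsto_catalan_sub (j : ℕ) :
    Filter.Tendsto (fun n : ℕ => (catalan (n - j) : ℝ) / catalan n) Filter.atTop
      (nhds ((1/4 : ℝ)^j)) := by
  have h := (tendsto_catalan_shift j).comp (Filter.tendsto_sub_atTop_nat j)
  refine Filter.Tendsto.congr' ?_ h
  filter_upwards [Filter.eventually_ge_atTop j] with n hn
  have : n - j + j = n := Nat.sub_add_cancel hn
  simp only [Function.comp]
  rw [this]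

lemma main_tendsto (k : ℕ) (hk : 1 ≤ k) :
    Filter.Tendsto (fun n : ℕ => (dyckDepthCount n k : ℝ) / (catalan n : ℝ)) Filter.atTop
      (nhds ((3 / 4) * (1 / 4) ^ (k - 1))) := by
  obtain ⟨j, rfl⟩ : ∃ j, k = j + 1 := ⟨k - 1, by omega⟩
  have hA := tendsto_catalan_sub j
  have hB := tendsto_catalan_sub (j + 1)
  have h := hA.sub hB
  have hval : (1/4 : ℝ)^j - (1/4)^(j+1) = 3/4 * (1/4)^(j+1-1) := by
    simp only [Nat.add_sub_cancel, pow_succ]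
    ring
  rw [hval] at h
  refine Filter.Tendsto.congr' ?_ h
  filter_upwards [Filter.eventually_ge_atTop (j + 2)] with n hn
  have hcount := dyckDepthCount_eq n (j+1) (by omega) (by omega)
  have hmono : catalan (n - (j+1)) ≤ catalan (n - (j+1) + 1) := catalan_mono_succ _
  have hidx : n - (j+1) + 1 = n - j := by omega
  have hcast : (dyckDepthCount n (j+1) : ℝ) = (catalan (n - j) : ℝ) - catalan (n - (j+1)) := by
    rw [hcount, ← hidx]
    push_cast [Nat.cast_sub hmono]
    ring
  rw [hcast, sub_div]

lemma mean_eq : (∑' m : ℕ, ((m : ℝ) + 1) * ((3 / 4) * (1 / 4) ^ m)) = 4 / 3 := by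
  have h1 := hasSum_choose_mul_geometric_of_norm_lt_one 1 (r := (1/4 : ℝ))
    (by rw [Real.norm_eq_abs, abs_lt]; norm_num)
  have hfe : (fun m : ℕ => ((m:ℝ)+1) * (3/4*(1/4)^m)) =
      fun m : ℕ => 3/4 * ((((m+1).choose 1 : ℕ) : ℝ) * (1/4)^m) := by
    funext m
    rw [Nat.choose_one_right]
    push_cast
    ring
  have H : HasSum (fun m : ℕ => ((m:ℝ)+1) * (3/4*(1/4)^m)) (4/3) := by
    rw [hfe]
    have e : (4/3:ℝ) = 3/4 * (1 / (1 - 1/4) ^ (1 + 1)) := by norm_num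
    rw [e]
    exact h1.mul_left (3/4)
  exact H.tsum_eq

lemma var_eq : (∑' m : ℕ, (((m : ℝ) + 1) - 4 / 3) ^ 2 * ((3 / 4) * (1 / 4) ^ m)) = 4 / 9 := by
  have hr : ‖(1/4 : ℝ)‖ < 1 := by rw [Real.norm_eq_abs, abs_lt]; norm_num
  have h2 := hasSum_choose_mul_geometric_of_norm_lt_one 2 (r := (1/4 : ℝ)) hr
  have h1 := hasSum_choose_mul_geometric_of_norm_lt_one 1 (r := (1/4 : ℝ)) hr
  have h0 : HasSum (fun m : ℕ => (1/4 : ℝ)^m) (1 - 1/4)⁻¹ :=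
    hasSum_geometric_of_lt_one (by norm_num) (by norm_num)
  have combo := (h2.mul_left (3/2)).add ((h1.mul_left (-(11/4))).add (h0.mul_left (4/3)))
  have hfe : (fun m : ℕ => (((m:ℝ)+1) - 4/3)^2 * (3/4*(1/4)^m)) =
      fun m : ℕ => 3/2 * ((((m+2).choose 2 : ℕ) : ℝ) * (1/4)^m) +
        (-(11/4) * ((((m+1).choose 1 : ℕ) : ℝ) * (1/4)^m) + 4/3 * (1/4)^m) := by
    funext m
    rw [Nat.choose_one_right, Nat.cast_choose_two]
    push_cast
    ring
  have H : HasSum (fun m : ℕ => (((m:ℝ)+1) - 4/3)^2 * (3/4*(1/4)^m)) (4/9) := by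
    rw [hfe]
    have e : (4/9:ℝ) = 3 / 2 * (1 / (1 - 1 / 4) ^ (2 + 1)) +
        (-(11 / 4) * (1 / (1 - 1 / 4) ^ (1 + 1)) + 4 / 3 * (1 - 1 / 4)⁻¹) := by norm_num
    rw [e]
    exact combo
  exact H.tsum_eq

/-- For fixed `k ≥ 1`, the proportion of Dyck paths of semilength `n` with first
helix of length `k` tends to `(3/4)·(1/4)^(k-1)`; this distribution
(`1 + Geometric(3/4)`) has mean `4/3` and variance `4/9`. -/
theorem stmt13 (k : ℕ) (hk : 1 ≤ k) :
    Tendsto (fun n : ℕ => (dyckDepthCount n k : ℝ) / (catalan n : ℝ)) atTop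
      (nhds ((3 / 4) * (1 / 4) ^ (k - 1))) ∧
    (∑' m : ℕ, ((m : ℝ) + 1) * ((3 / 4) * (1 / 4) ^ m)) = 4 / 3 ∧
    (∑' m : ℕ, (((m : ℝ) + 1) - 4 / 3) ^ 2 * ((3 / 4) * (1 / 4) ^ m)) = 4 / 9 :=
  ⟨main_tendsto k hk, mean_eq, var_eq⟩
end
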